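/- Let {ρ_i}_{i∈ℤ^d} be measurable functions ρ_i : Ω → [0,∞) with λ_i(ρ_i ∣ ω) = 1 for all i and ω, satisfying hypotheses (H1) and (H2), and let {ρ_Λ}_{Λ∈𝒮} be the family defined by the recursion ρ_{Λ∪{i}} = ρ_Λ/R_Λ^i with R_Λ^i(ω) = ((ρ_Λ/ρ_i) · λ_i(ρ_i ρ_Λ^{-1}))(x_Λ ω) for x_Λ ∈ b(Λ,{i},ω). Then each ρ_Λ is normalized: λ_Λ(ρ_Λ ∣ ω) = 1 for every finite Λ ⊆ ℤ^d and every ω ∈ Ω. -/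

import Mathlib

open MeasureTheory ProbabilityTheory
open scoped ENNReal NNReal

namespace GibbsSingleton

/-- Configuration space `E^ι`. -/
abbrev Config (ι E : Type*) := ι → E

variable {ι E : Type*}

/-- The configuration equal to `σ` on `Λ` and to `ω` off `Λ`. -/
def subst [DecidableEq ι] (Λ : Finset ι) (σ : {x // x ∈ Λ} → E) (ω : Config ι E) :
    Config ι E := fun i => if h : i ∈ Λ then σ ⟨i, h⟩ else ω i

variable [MeasurableSpace E]

/-- The free kernel `λ_Λ` applied to an `ℝ≥0∞`-valued function:
`λ_Λ(h ∣ ω) = ∫ h(σ_Λ ω) λ^Λ(dσ_Λ)`. -/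
noncomputable def freeF [DecidableEq ι] (lam : ι → Measure E) (Λ : Finset ι)
    (h : Config ι E → ℝ≥0∞) (ω : Config ι E) : ℝ≥0∞ :=
  ∫⁻ σ : {x // x ∈ Λ} → E, h (subst Λ σ ω) ∂(Measure.pi fun i : {x // x ∈ Λ} => lam i.1)

/-- The function `ρ_i ρ_j⁻¹`, `ℝ≥0∞`-valued. -/
noncomputable def rat (ρ : ι → Config ι E → ℝ≥0) (i j : ι) (η : Config ι E) : ℝ≥0∞ :=
  (ρ i η : ℝ≥0∞) / (ρ j η : ℝ≥0∞)

/-- The set `b(j,V,ω)` of good configurations at site `j` given `ω` outside `V ∪ {j}`. -/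
noncomputable def bSet [DecidableEq ι] (lam : ι → Measure E) (ρ : ι → Config ι E → ℝ≥0)
    (j : ι) (V : Finset ι) (ω : Config ι E) : Set E :=
  {x | (∀ σ : {y // y ∈ V} → E, 0 < ρ j (subst V σ (Function.update ω j x))) ∧
    ∀ i, i ≠ j →
      0 < (⨅ σ : {y // y ∈ V} → E,
          freeF lam {i} (rat ρ i j) (subst V σ (Function.update ω j x))) ∧
      (⨆ σ : {y // y ∈ V} → E,
          freeF lam {i} (rat ρ i j) (subst V σ (Function.update ω j x))) < ⊤}

/-- The multi-site good set `b(V,W,ω)`. -/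
noncomputable def bSetF [DecidableEq ι] (lam : ι → Measure E) (ρ : ι → Config ι E → ℝ≥0)
    (V W : Finset ι) (ω : Config ι E) : Set ({x // x ∈ V} → E) :=
  {xV | ∀ k : {x // x ∈ V}, xV k ∈ bSet lam ρ k.1 ((V.erase k.1) ∪ W) ω}

/-- The set `B(j,V) = {ω : ω_j ∈ b(j,V,ω)}`. -/
noncomputable def BSet [DecidableEq ι] (lam : ι → Measure E) (ρ : ι → Config ι E → ℝ≥0)
    (j : ι) (V : Finset ι) : Set (Config ι E) :=
  {ω | ω j ∈ bSet lam ρ j V ω}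

/-- Hypothesis (H1): every good set `b(j,V,ω)` is nonempty. -/
def H1 [DecidableEq ι] (lam : ι → Measure E) (ρ : ι → Config ι E → ℝ≥0) : Prop :=
  ∀ (ω : Config ι E) (j : ι) (V : Finset ι), j ∉ V → (bSet lam ρ j V ω).Nonempty

/-- The order-consistency identity appearing in hypothesis (H2), with the convention
`1/∞ = 0` built into `ℝ≥0∞` division. -/
def H2id [DecidableEq ι] (lam : ι → Measure E) (ρ : ι → Config ι E → ℝ≥0)
    (i j : ι) (ω : Config ι E) : Prop :=
  ∀ xi ∈ bSet lam ρ i {j} ω, ∀ xj ∈ bSet lam ρ j {i} ω,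
    ((ρ i ω : ℝ≥0∞) * (ρ j (Function.update ω i xi) : ℝ≥0∞)) /
      ((ρ i (Function.update ω i xi) : ℝ≥0∞) *
        freeF lam {j} (rat ρ j i) (Function.update ω i xi))
    = ((ρ j ω : ℝ≥0∞) * (ρ i (Function.update ω j xj) : ℝ≥0∞)) /
      ((ρ j (Function.update ω j xj) : ℝ≥0∞) *
        freeF lam {i} (rat ρ i j) (Function.update ω j xj))

/-- Hypothesis (H2). -/
def H2 [DecidableEq ι] (lam : ι → Measure E) (ρ : ι → Config ι E → ℝ≥0) : Prop :=
  ∀ i j, i ≠ j → ∀ ω : Config ι E, H2id lam ρ i j ω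

/-- `R_Θ^Γ` evaluated using the choice `x_Θ`:
`((ρ_Θ/ρ_Γ) ⬝ λ_Γ(ρ_Γ ρ_Θ⁻¹))(x_Θ ω)`. -/
noncomputable def Rexpr [DecidableEq ι] (lam : ι → Measure E)
    (ρF : Finset ι → Config ι E → ℝ≥0) (Θ Γ : Finset ι) (x : {y // y ∈ Θ} → E)
    (ω : Config ι E) : ℝ≥0∞ :=
  ((ρF Θ (subst Θ x ω) : ℝ≥0∞) / (ρF Γ (subst Θ x ω) : ℝ≥0∞)) *
    freeF lam Γ (fun η => (ρF Γ η : ℝ≥0∞) / (ρF Θ η : ℝ≥0∞)) (subst Θ x ω)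

/-- The family `ρ_Λ` is obtained from the singletons `ρ_i` by the recursive construction
`ρ_{Λ∪{i}} = ρ_Λ / R_Λ^i`, `R_Λ^i(ω) = ((ρ_Λ/ρ_i) ⬝ λ_i(ρ_i ρ_Λ⁻¹))(x_Λ ω)`,
`x_Λ ∈ b(Λ,{i},ω)` (the value being independent of this choice). -/
def IsRec [DecidableEq ι] (lam : ι → Measure E) (ρ : ι → Config ι E → ℝ≥0)
    (ρF : Finset ι → Config ι E → ℝ≥0) : Prop :=
  (∀ ω, ρF ∅ ω = 1) ∧ (∀ i, ρF {i} = ρ i) ∧ (∀ Λ, Measurable (ρF Λ)) ∧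
  ∀ (Λ : Finset ι) (i : ι), i ∉ Λ → ∀ ω : Config ι E,
    (∀ x ∈ bSetF lam ρ Λ {i} ω, ∀ x' ∈ bSetF lam ρ Λ {i} ω,
      Rexpr lam ρF Λ {i} x ω = Rexpr lam ρF Λ {i} x' ω) ∧
    ∀ x ∈ bSetF lam ρ Λ {i} ω,
      (ρF (insert i Λ) ω : ℝ≥0∞) = (ρF Λ ω : ℝ≥0∞) / Rexpr lam ρF Λ {i} x ω

/-- The sub-σ-algebra `𝓕_U` of events generated by the coordinates in `U`. -/
def cylSigma (E : Type*) [MeasurableSpace E] {ι : Type*} (U : Set ι) :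
    MeasurableSpace (Config ι E) :=
  MeasurableSpace.comap (fun ω (i : U) => ω i.1) MeasurableSpace.pi

/-- A specification: a family of probability kernels, measurable w.r.t. the outside
σ-algebra, proper, and consistent. -/
def IsSpecification (γ : Finset ι → Kernel (Config ι E) (Config ι E)) : Prop :=
  (∀ Λ, IsMarkovKernel (γ Λ)) ∧
  (∀ (Λ : Finset ι) (A : Set (Config ι E)), MeasurableSet A →
    Measurable[cylSigma E ((Λ : Set ι)ᶜ)] fun ω => γ Λ ω A) ∧
  (∀ (Λ : Finset ι) (B : Set (Config ι E)), MeasurableSet[cylSigma E ((Λ : Set ι)ᶜ)] B →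
    ∀ ω, γ Λ ω B = B.indicator (fun _ => (1 : ℝ≥0∞)) ω) ∧
  (∀ Λ Δ : Finset ι, Λ ⊆ Δ → (γ Λ).comp (γ Δ) = γ Δ)

/-- The kernel family `γ` is `{ρ_Λ λ_Λ}`. -/
def MatchesDensity [DecidableEq ι] (lam : ι → Measure E)
    (γ : Finset ι → Kernel (Config ι E) (Config ι E))
    (ρF : Finset ι → Config ι E → ℝ≥0) : Prop :=
  ∀ (Λ : Finset ι) (ω : Config ι E) (A : Set (Config ι E)), MeasurableSet A →
    γ Λ ω A = freeF lam Λ (fun η => (ρF Λ η : ℝ≥0∞) * A.indicator (fun _ => 1) η) ω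

end GibbsSingleton

open GibbsSingleton MeasureTheory ProbabilityTheory

open scoped ENNReal NNReal
namespace GibbsAux
open MeasureTheory

section PiRestrict
variable {κ E : Type*} [Fintype κ] [MeasurableSpace E]

theorem pi_restrict_eq_on_subset (μ : κ → Measure E) (T : κ → Set E)
    (hT : ∀ k, MeasurableSet (T k)) {A : Set (κ → E)} (hA : MeasurableSet A)
    (hsub : A ⊆ Set.univ.pi T) :
    Measure.pi μ A = Measure.pi (fun k => (μ k).restrict (T k)) A := by
  cases isEmpty_or_nonempty κ with
  | inl h =>
    rw [Measure.pi_of_empty μ, Measure.pi_of_empty (fun k => (μ k).restrict (T k))]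
  | inr hne =>
    apply le_antisymm
    · rw [Measure.pi_def, Measure.pi_def, toMeasure_apply _ _ hA, toMeasure_apply _ _ hA]
      rw [OuterMeasure.pi, OuterMeasure.boundedBy_apply]
      refine le_iInf₂ fun t ht => ?_
      have hcov : A ⊆ ⋃ n, (t n ∩ Set.univ.pi T) := by
        intro a ha
        rcases Set.mem_iUnion.1 (ht ha) with ⟨n, hn⟩
        exact Set.mem_iUnion.2 ⟨n, hn, hsub ha⟩
      calc (OuterMeasure.pi fun i => (μ i).toOuterMeasure) A
          ≤ ∑' n, (OuterMeasure.pi fun i => (μ i).toOuterMeasure) (t n ∩ Set.univ.pi T) :=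
            le_trans (measure_mono hcov) (measure_iUnion_le _)
        _ ≤ ∑' n, ⨆ (_ : (t n).Nonempty),
              piPremeasure (fun i => ((μ i).restrict (T i)).toOuterMeasure) (t n) := by
            refine ENNReal.tsum_le_tsum fun n => ?_
            rcases Set.eq_empty_or_nonempty (t n ∩ Set.univ.pi T) with he | hne'
            · rw [he]; simp
            · have htn : (t n).Nonempty := hne'.mono Set.inter_subset_left |>.mono (by rfl)
              rw [iSup_pos htn]
              refine le_trans (OuterMeasure.boundedBy_le _) ?_
              rw [piPremeasure, piPremeasure]
              refine Finset.prod_le_prod' fun k _ => ?_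
              have h1 : Function.eval k '' (t n ∩ Set.univ.pi T)
                  ⊆ (Function.eval k '' t n) ∩ T k := by
                rintro _ ⟨a, ⟨ha1, ha2⟩, rfl⟩
                exact ⟨⟨a, ha1, rfl⟩, ha2 k (Set.mem_univ k)⟩
              calc (μ k).toOuterMeasure (Function.eval k '' (t n ∩ Set.univ.pi T))
                  ≤ (μ k).toOuterMeasure ((Function.eval k '' t n) ∩ T k) := measure_mono h1
                _ = ((μ k).restrict (T k)).toOuterMeasure (Function.eval k '' t n) := by
                    rw [Measure.coe_toOuterMeasure, Measure.coe_toOuterMeasure,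
                      Measure.restrict_apply' (hT k)]
    · rw [Measure.pi_def, Measure.pi_def, toMeasure_apply _ _ hA, toMeasure_apply _ _ hA]
      refine (OuterMeasure.le_pi.2 fun s hs => ?_) A
      refine le_trans (OuterMeasure.pi_pi_le _ s) (Finset.prod_le_prod' fun k _ => ?_)
      rw [Measure.coe_toOuterMeasure, Measure.coe_toOuterMeasure,
        Measure.restrict_apply' (hT k)]
      exact measure_mono Set.inter_subset_left

theorem lintegral_pi_restrict (μ : κ → Measure E) (T : κ → Set E)
    (hT : ∀ k, MeasurableSet (T k)) (g : (κ → E) → ℝ≥0∞)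
    (hg : ∀ ζ, ζ ∉ Set.univ.pi T → g ζ = 0) :
    ∫⁻ ζ, g ζ ∂Measure.pi μ = ∫⁻ ζ, g ζ ∂Measure.pi (fun k => (μ k).restrict (T k)) := by
  have hrect : MeasurableSet (Set.univ.pi T) := MeasurableSet.univ_pi hT
  have hgi : g = (Set.univ.pi T).indicator g := by
    funext ζ
    by_cases h : ζ ∈ Set.univ.pi T
    · rw [Set.indicator_of_mem h]
    · rw [Set.indicator_of_notMem h, hg ζ h]
  have hres : (Measure.pi μ).restrict (Set.univ.pi T)
      = (Measure.pi (fun k => (μ k).restrict (T k))).restrict (Set.univ.pi T) := by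
    ext B hB
    rw [Measure.restrict_apply hB, Measure.restrict_apply hB]
    exact pi_restrict_eq_on_subset μ T hT (hB.inter hrect) Set.inter_subset_right
  rw [hgi, lintegral_indicator hrect, lintegral_indicator hrect, hres]

end PiRestrict

theorem sigmaFinite_restrict_pos {E : Type*} [MeasurableSpace E]
    (μ : Measure E) (g : E → ℝ≥0∞) (hg : Measurable g)
    (hint : ∫⁻ t, g t ∂μ = 1) : SigmaFinite (μ.restrict {t | 0 < g t}) := by
  set T : Set E := {t | 0 < g t} with hTdef
  have hT : MeasurableSet T := measurableSet_lt measurable_const hg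
  refine ⟨⟨⟨fun n => {t | ((n : ℝ≥0∞) + 1)⁻¹ ≤ g t} ∪ Tᶜ, fun _ => trivial, fun n => ?_, ?_⟩⟩⟩
  · refine lt_of_le_of_lt (measure_union_le _ _) ?_
    have h1 : (μ.restrict T) Tᶜ = 0 := by
      rw [Measure.restrict_apply' hT, Set.compl_inter_self, measure_empty]
    have h2 : (μ.restrict T) {t | ((n : ℝ≥0∞) + 1)⁻¹ ≤ g t} ≤ (n : ℝ≥0∞) + 1 := by
      refine le_trans (le_trans (Measure.restrict_le_self _)
        (meas_ge_le_lintegral_div hg.aemeasurable ?_ ?_)) ?_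
      · simp
      · simp [ENNReal.inv_ne_top]
      · rw [hint, one_div, inv_inv]
    rw [h1]
    simpa using lt_of_le_of_lt h2 (by simp [lt_top_iff_ne_top] : (n : ℝ≥0∞) + 1 < ⊤)
  · refine Set.eq_univ_of_forall fun t => ?_
    by_cases h : 0 < g t
    · obtain ⟨n, hn⟩ := ENNReal.exists_inv_nat_lt h.ne'
      refine Set.mem_iUnion.2 ⟨n, Set.mem_union_left _ ?_⟩
      exact le_of_lt (lt_of_le_of_lt (by gcongr; simp) hn)
    · exact Set.mem_iUnion.2 ⟨0, Set.mem_union_right _ h⟩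

end GibbsAux

open scoped ENNReal NNReal
namespace GibbsAux
open GibbsSingleton MeasureTheory Set Function

/-! ### ENNReal helpers -/

theorem ediv_div {a b k : ℝ≥0∞} (hb0 : b ≠ 0) (hbT : b ≠ ⊤) (hk0 : k ≠ 0) (hkT : k ≠ ⊤) :
    a / (b / k) = (a / b) * k := by
  rw [div_eq_mul_inv, ENNReal.inv_div (Or.inl hkT) (Or.inl hk0), div_eq_mul_inv,
    div_eq_mul_inv]
  ring

theorem ediv_divmul {a b k : ℝ≥0∞} (ha0 : a ≠ 0) (haT : a ≠ ⊤) (hb0 : b ≠ 0) (hbT : b ≠ ⊤)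
    (hk0 : k ≠ 0) (hkT : k ≠ ⊤) : a / ((a / b) * k) = b / k := by
  have hab0 : a / b ≠ 0 := by simp [ENNReal.div_eq_zero_iff, ha0, hbT]
  have habT : a / b ≠ ⊤ := by simp [ENNReal.div_eq_top, haT, hb0]
  rw [div_eq_mul_inv a, ENNReal.mul_inv (Or.inl hab0) (Or.inl habT),
    ENNReal.inv_div (Or.inr haT) (Or.inr ha0), ← mul_assoc, mul_comm a (b/a),
    ENNReal.div_mul_cancel ha0 haT, div_eq_mul_inv]

/-! ### subst/config algebra -/

variable {ι E : Type*} [MeasurableSpace E] [DecidableEq ι]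

theorem subst_apply (Λ : Finset ι) (σ : {x // x ∈ Λ} → E) (ω : Config ι E) (i : ι) :
    subst Λ σ ω i = if h : i ∈ Λ then σ ⟨i, h⟩ else ω i := rfl

theorem subst_eq_updateFinset (Λ : Finset ι) (σ : {x // x ∈ Λ} → E) (ω : Config ι E) :
    subst Λ σ ω = Function.updateFinset ω Λ σ := rfl

theorem subst_subst (Λ : Finset ι) (x σ : {y // y ∈ Λ} → E) (ω : Config ι E) :
    subst Λ x (subst Λ σ ω) = subst Λ x ω := by
  funext l; by_cases h : l ∈ Λ <;> simp [subst_apply, h]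

variable (lam : ι → Measure E) 

theorem freeF_eq_lmarginal (Λ : Finset ι) (h : Config ι E → ℝ≥0∞) (ω : Config ι E) :
    freeF lam Λ h ω = (∫⋯∫⁻_Λ, h ∂lam) ω := rfl

theorem freeF_singleton (i : ι) (h : Config ι E → ℝ≥0∞) (ω : Config ι E) :
    freeF lam {i} h ω = ∫⁻ t, h (Function.update ω i t) ∂lam i := by
  rw [freeF_eq_lmarginal, lmarginal_singleton]

variable {ρ : ι → Config ι E → ℝ≥0}

theorem bSet_subset {m : ι} {V0 V1 : Finset ι} (hV : V0 ⊆ V1) (hm : m ∉ V1)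
    {ω η : Config ι E} (hωη : ∀ l, l ∉ V1 → l ≠ m → η l = ω l) {x : E}
    (hx : x ∈ bSet lam ρ m V1 ω) : x ∈ bSet lam ρ m V0 η := by
  have key : ∀ τ : {y // y ∈ V0} → E,
      subst V0 τ (Function.update η m x)
        = subst V1 (fun l => if h : l.1 ∈ V0 then τ ⟨l.1, h⟩ else η l.1)
            (Function.update ω m x) := by
    intro τ; funext l
    by_cases h0 : l ∈ V0
    · rw [subst_apply, dif_pos h0, subst_apply, dif_pos (hV h0), dif_pos h0]
    · by_cases h1 : l ∈ V1
      · have hlm : l ≠ m := fun he => hm (he ▸ h1)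
        rw [subst_apply, dif_neg h0, subst_apply, dif_pos h1, dif_neg h0,
          Function.update_of_ne hlm]
      · by_cases hlm : l = m
        · subst hlm
          rw [subst_apply, dif_neg h0, subst_apply, dif_neg h1,
            Function.update_self, Function.update_self]
        · rw [subst_apply, dif_neg h0, subst_apply, dif_neg h1,
            Function.update_of_ne hlm, Function.update_of_ne hlm, hωη l h1 hlm]
  refine ⟨fun τ => ?_, fun i hi => ?_⟩
  · rw [key τ]; exact hx.1 _
  · obtain ⟨h1, h2⟩ := hx.2 i hi
    refine ⟨lt_of_lt_of_le h1 (le_iInf fun τ => ?_), lt_of_le_of_lt (iSup_le fun τ => ?_) h2⟩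
    · rw [key τ]; exact iInf_le _ _
    · rw [key τ]
      exact le_iSup_of_le (fun l => if h : l.1 ∈ V0 then τ ⟨l.1, h⟩ else η l.1) le_rfl

end GibbsAux

namespace GibbsAux
open GibbsSingleton MeasureTheory Set Function

variable {ι E : Type*} [MeasurableSpace E] [DecidableEq ι]
variable {lam : ι → Measure E} {ρ : ι → Config ι E → ℝ≥0}
variable {ρF : Finset ι → Config ι E → ℝ≥0}

/-- Joint positivity and integral-boundedness lemma, by strong induction on `|Λ|`. -/
theorem posK
    (hnorm : ∀ (i : ι) (ω : Config ι E), freeF lam {i} (fun η => (ρ i η : ℝ≥0∞)) ω = 1)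
    (h0 : ∀ ω, ρF ∅ ω = 1) (hsing : ∀ i, ρF {i} = ρ i)
    (hstep : ∀ (Λ : Finset ι) (i : ι), i ∉ Λ → ∀ ω : Config ι E,
      ∀ x ∈ bSetF lam ρ Λ {i} ω,
        (ρF (insert i Λ) ω : ℝ≥0∞) = (ρF Λ ω : ℝ≥0∞) / Rexpr lam ρF Λ {i} x ω) :
    ∀ (n : ℕ) (Λ : Finset ι), Λ.card = n → ∀ W : Finset ι, (∀ k ∈ Λ, k ∉ W) →
      ∀ (ω : Config ι E) (x : {y // y ∈ Λ} → E),
      (∀ k : {y // y ∈ Λ}, x k ∈ bSet lam ρ k.1 ((Λ.erase k.1) ∪ W) ω) →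
      (∀ σ : {y // y ∈ W} → E,
        0 < (ρF Λ (subst Λ x (subst W σ ω)) : ℝ≥0∞)) ∧
      (∀ i ∈ W, ∃ c C : ℝ≥0∞, 0 < c ∧ C < ⊤ ∧ ∀ σ : {y // y ∈ W} → E,
        c ≤ freeF lam {i} (fun η => (ρ i η : ℝ≥0∞) / (ρF Λ η : ℝ≥0∞))
              (subst Λ x (subst W σ ω)) ∧
        freeF lam {i} (fun η => (ρ i η : ℝ≥0∞) / (ρF Λ η : ℝ≥0∞))
              (subst Λ x (subst W σ ω)) ≤ C) := by
  intro n
  induction n using Nat.strong_induction_on with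
  | _ n IH =>
  intro Λ hcard W hdisj ω x hx
  rcases Finset.eq_empty_or_nonempty Λ with rfl | ⟨k, hk⟩
  · -- base case
    have hsubst : ∀ σ : {y // y ∈ W} → E, ∀ η : Config ι E,
        subst (∅ : Finset ι) x η = η := by
      intro σ η; funext l; rw [subst_apply, dif_neg (Finset.notMem_empty l)]
    constructor
    · intro σ; rw [hsubst σ, h0]; simp
    · intro i _
      refine ⟨1, 1, zero_lt_one, ENNReal.one_lt_top, fun σ => ?_⟩
      have he : (fun η => (ρ i η : ℝ≥0∞) / (ρF ∅ η : ℝ≥0∞)) = fun η => (ρ i η : ℝ≥0∞) := by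
        funext η; rw [h0 η]; simp
      rw [hsubst σ, he, hnorm i]
      exact ⟨le_refl 1, le_refl 1⟩
  · -- inductive case
    set Λ' := Λ.erase k with hΛ'
    have hkΛ' : k ∉ Λ' := Finset.notMem_erase k Λ
    have hins : insert k Λ' = Λ := Finset.insert_erase hk
    have hcard' : Λ'.card < n := by
      rw [← hcard]; exact Finset.card_erase_lt_of_mem hk
    set W' := insert k W with hW'
    have hkW : k ∉ W := hdisj k hk
    -- restricted configuration
    set x' : {y // y ∈ Λ'} → E := fun m => x ⟨m.1, Finset.mem_of_mem_erase m.2⟩ with hx'def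
    -- notation for the substituted configuration
    set ξ : ({y // y ∈ W} → E) → Config ι E := fun σ => subst Λ x (subst W σ ω) with hξ
    -- (c1) : ξ σ = subst Λ' x' (subst W' (σ' σ) ω)
    set σ' : ({y // y ∈ W} → E) → ({y // y ∈ W'} → E) :=
      fun σ l => if h : l.1 ∈ W then σ ⟨l.1, h⟩ else x ⟨k, hk⟩ with hσ'
    have hWdisj : ∀ l ∈ W, l ∉ Λ := fun l hlW hlΛ => hdisj l hlΛ hlW
    have c1 : ∀ σ, ξ σ = subst Λ' x' (subst W' (σ' σ) ω) := by
      intro σ; funext l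
      simp only [hξ, hσ', hx'def, subst_apply]
      by_cases hlΛ' : l ∈ Λ'
      · have hlΛ : l ∈ Λ := Finset.mem_of_mem_erase hlΛ'
        rw [dif_pos hlΛ, dif_pos hlΛ']
      · by_cases hlk : l = k
        · subst hlk
          rw [dif_pos hk, dif_neg hkΛ', dif_pos (Finset.mem_insert_self l W), dif_neg hkW]
        · have hlΛ : l ∉ Λ := fun hc => hlΛ' (Finset.mem_erase.2 ⟨hlk, hc⟩)
          by_cases hlW : l ∈ W
          · rw [dif_neg hlΛ, dif_pos hlW, dif_neg hlΛ',
              dif_pos (Finset.mem_insert_of_mem hlW), dif_pos hlW]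
          · have hlW' : l ∉ W' := by
              rw [hW']; exact fun hc => (Finset.mem_insert.1 hc).elim hlk hlW
            rw [dif_neg hlΛ, dif_neg hlW, dif_neg hlΛ', dif_neg hlW']
    -- (c2) : ξ σ as a substitution around site k
    set τ : ({y // y ∈ W} → E) → ({y // y ∈ Λ.erase k ∪ W} → E) :=
      fun σ l => if h : l.1 ∈ Λ then x ⟨l.1, h⟩
        else σ ⟨l.1, (Finset.mem_union.1 l.2).resolve_left
          (fun hc => h (Finset.mem_of_mem_erase hc))⟩ with hτ
    have c2 : ∀ σ, ξ σ = subst (Λ.erase k ∪ W) (τ σ) (Function.update ω k (x ⟨k, hk⟩)) := by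
      intro σ; funext l
      simp only [hξ, hτ, subst_apply]
      by_cases hlΛ : l ∈ Λ
      · by_cases hlk : l = k
        · subst hlk
          have hnmem : l ∉ Λ.erase l ∪ W := by
            rw [Finset.mem_union]; exact fun hc => hc.elim
              (fun h => (Finset.notMem_erase l Λ) h) (fun h => hkW h)
          rw [dif_pos hlΛ, dif_neg hnmem, Function.update_self]
        · have hmem : l ∈ Λ.erase k ∪ W :=
            Finset.mem_union_left _ (Finset.mem_erase.2 ⟨hlk, hlΛ⟩)
          rw [dif_pos hlΛ, dif_pos hmem, dif_pos hlΛ]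
      · by_cases hlW : l ∈ W
        · have hmem : l ∈ Λ.erase k ∪ W := Finset.mem_union_right _ hlW
          rw [dif_neg hlΛ, dif_pos hlW, dif_pos hmem, dif_neg hlΛ]
        · have hlk : l ≠ k := fun hc => hlΛ (hc ▸ hk)
          have hmem : l ∉ Λ.erase k ∪ W := by
            rw [Finset.mem_union]
            exact fun hc => hc.elim (fun h => hlΛ (Finset.mem_of_mem_erase h)) hlW
          rw [dif_neg hlΛ, dif_neg hlW, dif_neg hmem, Function.update_of_ne hlk]
    -- (c3) : x' is good for (Λ', {k}) in environment ξ σ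
    have c3 : ∀ σ, ∀ m : {y // y ∈ Λ'},
        x' m ∈ bSet lam ρ m.1 ((Λ'.erase m.1) ∪ {k}) (ξ σ) := by
      intro σ m
      have hmΛ : m.1 ∈ Λ := Finset.mem_of_mem_erase m.2
      have hmk : m.1 ≠ k := (Finset.mem_erase.1 m.2).1
      refine bSet_subset lam ?_ ?_ ?_ (hx ⟨m.1, hmΛ⟩)
      · intro l hl
        rcases Finset.mem_union.1 hl with hl1 | hl2
        · rcases Finset.mem_erase.1 hl1 with ⟨hlm, hlΛ'⟩
          exact Finset.mem_union_left _
            (Finset.mem_erase.2 ⟨hlm, Finset.mem_of_mem_erase hlΛ'⟩)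
        · have : l = k := Finset.mem_singleton.1 hl2
          subst this
          exact Finset.mem_union_left _ (Finset.mem_erase.2 ⟨fun hc => hmk hc.symm, hk⟩)
      · rw [Finset.mem_union]
        exact fun hc => hc.elim (fun h => Finset.notMem_erase m.1 Λ h)
          (fun h => hdisj m.1 hmΛ h)
      · intro l hl hlm
        have hlΛ : l ∉ Λ := fun hc => hl (Finset.mem_union_left _ (Finset.mem_erase.2 ⟨hlm, hc⟩))
        have hlW : l ∉ W := fun hc => hl (Finset.mem_union_right _ hc)
        simp only [hξ, subst_apply]
        rw [dif_neg hlΛ, dif_neg hlW]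
    -- (c4) : x' is good for (Λ', W') in environment ω
    have c4 : ∀ m : {y // y ∈ Λ'}, x' m ∈ bSet lam ρ m.1 ((Λ'.erase m.1) ∪ W') ω := by
      intro m
      have hmΛ : m.1 ∈ Λ := Finset.mem_of_mem_erase m.2
      have hmk : m.1 ≠ k := (Finset.mem_erase.1 m.2).1
      have hVeq : (Λ'.erase m.1) ∪ W' = (Λ.erase m.1) ∪ W := by
        ext l
        simp only [Finset.mem_union, Finset.mem_erase, Finset.mem_insert, hΛ', hW']
        constructor
        · rintro (⟨hlm, hlk, hlΛ⟩ | hlk | hlW)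
          · exact Or.inl ⟨hlm, hlΛ⟩
          · subst hlk; exact Or.inl ⟨fun hc => hmk hc.symm, hk⟩
          · exact Or.inr hlW
        · rintro (⟨hlm, hlΛ⟩ | hlW)
          · by_cases hlk : l = k
            · exact Or.inr (Or.inl hlk)
            · exact Or.inl ⟨hlm, hlk, hlΛ⟩
          · exact Or.inr (Or.inr hlW)
      rw [hVeq]
      exact hx ⟨m.1, hmΛ⟩
    have hdisj' : ∀ m ∈ Λ', m ∉ W' := by
      intro m hm
      rw [hW']
      have : m ≠ k := (Finset.mem_erase.1 hm).1
      exact fun hc => (Finset.mem_insert.1 hc).elim this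
        (hdisj m (Finset.mem_of_mem_erase hm))
    obtain ⟨IH1, IH2⟩ := IH Λ'.card hcard' Λ' rfl W' hdisj' ω x' c4
    -- value of ρF Λ' at ξ σ is positive
    have hA : ∀ σ, 0 < (ρF Λ' (ξ σ) : ℝ≥0∞) := by
      intro σ; rw [c1 σ]; exact IH1 (σ' σ)
    -- bound for K'' at ξ σ
    obtain ⟨c'', C'', hc''0, hC''T, hKbound⟩ := IH2 k (Finset.mem_insert_self k W)
    have hK : ∀ σ, c'' ≤ freeF lam {k} (fun η => (ρ k η : ℝ≥0∞) / (ρF Λ' η : ℝ≥0∞)) (ξ σ) ∧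
        freeF lam {k} (fun η => (ρ k η : ℝ≥0∞) / (ρF Λ' η : ℝ≥0∞)) (ξ σ) ≤ C'' := by
      intro σ; rw [c1 σ]; exact hKbound (σ' σ)
    -- positivity of ρ k at ξ σ
    have hB : ∀ σ, 0 < (ρ k (ξ σ) : ℝ≥0∞) := by
      intro σ
      rw [c2 σ]
      exact_mod_cast (hx ⟨k, hk⟩).1 (τ σ)
    -- (c5) : subst Λ' x' (ξ σ) = ξ σ
    have c5 : ∀ σ, subst Λ' x' (ξ σ) = ξ σ := by
      intro σ; funext l
      simp only [hξ, hx'def, subst_apply]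
      by_cases hlΛ' : l ∈ Λ'
      · have hlΛ : l ∈ Λ := Finset.mem_of_mem_erase hlΛ'
        rw [dif_pos hlΛ', dif_pos hlΛ]
      · rw [dif_neg hlΛ']
    -- the decomposition identity
    have hdec : ∀ σ, (ρF Λ (ξ σ) : ℝ≥0∞)
        = (ρF Λ' (ξ σ) : ℝ≥0∞) /
          (((ρF Λ' (ξ σ) : ℝ≥0∞) / (ρ k (ξ σ) : ℝ≥0∞)) *
            freeF lam {k} (fun η => (ρ k η : ℝ≥0∞) / (ρF Λ' η : ℝ≥0∞)) (ξ σ)) := by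
      intro σ
      have := hstep Λ' k hkΛ' (ξ σ) x' (fun m => c3 σ m)
      rw [hins] at this
      rw [this, Rexpr, c5 σ, hsing k]
    -- closed form : ρF Λ (ξ σ) = B σ / K'' σ
    have hform : ∀ σ, (ρF Λ (ξ σ) : ℝ≥0∞)
        = (ρ k (ξ σ) : ℝ≥0∞) /
          freeF lam {k} (fun η => (ρ k η : ℝ≥0∞) / (ρF Λ' η : ℝ≥0∞)) (ξ σ) := by
      intro σ
      rw [hdec σ]
      exact ediv_divmul (hA σ).ne' ENNReal.coe_ne_top (hB σ).ne' ENNReal.coe_ne_top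
        (lt_of_lt_of_le hc''0 (hK σ).1).ne'
        (lt_of_le_of_lt (hK σ).2 hC''T).ne
    constructor
    · -- part (i)
      intro σ
      rw [hform σ]
      exact ENNReal.div_pos (hB σ).ne' (lt_of_le_of_lt (hK σ).2 hC''T).ne
    · -- part (ii)
      intro i hiW
      have hik : i ≠ k := fun hc => hkW (hc ▸ hiW)
      have hiΛ : i ∉ Λ := fun hc => hdisj i hc hiW
      obtain ⟨hc0, hC0⟩ := (hx ⟨k, hk⟩).2 i hik
      set c₀ : ℝ≥0∞ := ⨅ σ : {y // y ∈ Λ.erase k ∪ W} → E,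
        freeF lam {i} (rat ρ i k) (subst (Λ.erase k ∪ W) σ (Function.update ω k (x ⟨k, hk⟩)))
        with hc₀
      set C₀ : ℝ≥0∞ := ⨆ σ : {y // y ∈ Λ.erase k ∪ W} → E,
        freeF lam {i} (rat ρ i k) (subst (Λ.erase k ∪ W) σ (Function.update ω k (x ⟨k, hk⟩)))
        with hC₀
      refine ⟨c₀ * c'', C₀ * C'', ENNReal.mul_pos hc0.ne' hc''0.ne',
        ENNReal.mul_lt_top hC0 hC''T, fun σ => ?_⟩
      -- the i-update of σ
      have hiW' : (⟨i, hiW⟩ : {y // y ∈ W}) ∈ (Set.univ : Set {y // y ∈ W}) := trivial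
      set σt : E → ({y // y ∈ W} → E) := fun t => Function.update σ ⟨i, hiW⟩ t with hσt
      -- (c6)
      have c6 : ∀ t, Function.update (ξ σ) i t = ξ (σt t) := by
        intro t; funext l
        by_cases hli : l = i
        · subst hli
          rw [Function.update_self]
          simp only [hξ, hσt, subst_apply]
          rw [dif_neg hiΛ, dif_pos hiW, Function.update_self]
        · rw [Function.update_of_ne hli]
          simp only [hξ, hσt, subst_apply]
          by_cases hlΛ : l ∈ Λ
          · rw [dif_pos hlΛ, dif_pos hlΛ]
          · rw [dif_neg hlΛ, dif_neg hlΛ]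
            by_cases hlW : l ∈ W
            · rw [dif_pos hlW, dif_pos hlW,
                Function.update_of_ne (fun hc => hli (congrArg Subtype.val hc))]
            · rw [dif_neg hlW, dif_neg hlW]
      -- the inner integral against rat ρ i k is bounded
      have hrat : c₀ ≤ freeF lam {i} (rat ρ i k) (ξ σ) ∧
          freeF lam {i} (rat ρ i k) (ξ σ) ≤ C₀ := by
        rw [c2 σ]
        exact ⟨iInf_le _ _, le_iSup_of_le (τ σ) le_rfl⟩
      have hc''T : c'' ≠ ⊤ :=
        (lt_of_le_of_lt (hK σ).1 (lt_of_le_of_lt (hK σ).2 hC''T)).ne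
      -- rewrite the freeF value as an integral
      rw [freeF_singleton]
      have hinteg : ∀ t, (ρ i (Function.update (ξ σ) i t) : ℝ≥0∞) /
          (ρF Λ (Function.update (ξ σ) i t) : ℝ≥0∞)
          = rat ρ i k (ξ (σt t)) *
            freeF lam {k} (fun η => (ρ k η : ℝ≥0∞) / (ρF Λ' η : ℝ≥0∞)) (ξ (σt t)) := by
        intro t
        rw [c6 t, hform (σt t), rat]
        exact ediv_div (hB (σt t)).ne' ENNReal.coe_ne_top
          (lt_of_lt_of_le hc''0 (hK (σt t)).1).ne'
          (lt_of_le_of_lt (hK (σt t)).2 hC''T).ne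
      constructor
      · calc c₀ * c''
            ≤ (freeF lam {i} (rat ρ i k) (ξ σ)) * c'' :=
              mul_le_mul_left hrat.1 c''
          _ = (∫⁻ t, rat ρ i k (Function.update (ξ σ) i t) ∂lam i) * c'' := by
              rw [freeF_singleton]
          _ = ∫⁻ t, rat ρ i k (Function.update (ξ σ) i t) * c'' ∂lam i :=
              (lintegral_mul_const' c'' _ hc''T).symm
          _ ≤ ∫⁻ t, (ρ i (Function.update (ξ σ) i t) : ℝ≥0∞) /
                (ρF Λ (Function.update (ξ σ) i t) : ℝ≥0∞) ∂lam i := by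
              refine lintegral_mono fun t => ?_
              rw [hinteg t, c6 t]
              exact mul_le_mul_right (hK (σt t)).1 _
      · calc (∫⁻ t, (ρ i (Function.update (ξ σ) i t) : ℝ≥0∞) /
                (ρF Λ (Function.update (ξ σ) i t) : ℝ≥0∞) ∂lam i)
            ≤ ∫⁻ t, rat ρ i k (Function.update (ξ σ) i t) * C'' ∂lam i := by
              refine lintegral_mono fun t => ?_
              rw [hinteg t, c6 t]
              exact mul_le_mul_right (hK (σt t)).2 _
          _ = (∫⁻ t, rat ρ i k (Function.update (ξ σ) i t) ∂lam i) * C'' :=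
              lintegral_mul_const' C'' _ hC''T.ne
          _ = (freeF lam {i} (rat ρ i k) (ξ σ)) * C'' := by rw [freeF_singleton]
          _ ≤ C₀ * C'' := mul_le_mul_left hrat.2 C''

end GibbsAux

namespace GibbsAux
open GibbsSingleton MeasureTheory Set Function

variable {ι E : Type*} [MeasurableSpace E] [DecidableEq ι]
variable {lam : ι → Measure E} {ρ : ι → Config ι E → ℝ≥0}
variable {ρF : Finset ι → Config ι E → ℝ≥0}

/-- Support lemma: where `ρ_Θ` does not vanish, the singleton `ρ_k` does not vanish
at the configuration whose other coordinates are replaced by good values. -/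
theorem support_step
    (hsing : ∀ i, ρF {i} = ρ i)
    (hstep : ∀ (Λ : Finset ι) (i : ι), i ∉ Λ → ∀ ω : Config ι E,
      ∀ x ∈ bSetF lam ρ Λ {i} ω,
        (ρF (insert i Λ) ω : ℝ≥0∞) = (ρF Λ ω : ℝ≥0∞) / Rexpr lam ρF Λ {i} x ω)
    (Θ : Finset ι) (k : ι) (hk : k ∈ Θ) (ω : Config ι E)
    (x' : {y // y ∈ Θ.erase k} → E)
    (hx' : ∀ m : {y // y ∈ Θ.erase k},
      x' m ∈ bSet lam ρ m.1 (((Θ.erase k).erase m.1) ∪ {k}) ω)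
    (ζ : {y // y ∈ Θ} → E) (hne : (ρF Θ (subst Θ ζ ω) : ℝ≥0∞) ≠ 0) :
    0 < ρ k (Function.update (subst (Θ.erase k) x' ω) k (ζ ⟨k, hk⟩)) := by
  set η := subst Θ ζ ω with hη
  have hx'η : ∀ m : {y // y ∈ Θ.erase k},
      x' m ∈ bSet lam ρ m.1 (((Θ.erase k).erase m.1) ∪ {k}) η := by
    intro m
    refine bSet_subset lam (le_refl _) ?_ ?_ (hx' m)
    · rw [Finset.mem_union]
      rintro (h | h)
      · exact Finset.notMem_erase m.1 _ h
      · exact (Finset.mem_erase.1 m.2).1 (Finset.mem_singleton.1 h)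
    · intro l hl hlm
      have hlΘ : l ∉ Θ := by
        intro hc
        by_cases hlk : l = k
        · exact hl (Finset.mem_union_right _ (Finset.mem_singleton.2 hlk))
        · exact hl (Finset.mem_union_left _
            (Finset.mem_erase.2 ⟨hlm, Finset.mem_erase.2 ⟨hlk, hc⟩⟩))
      rw [hη]; simp only [subst_apply]; rw [dif_neg hlΘ]
  have heq := hstep (Θ.erase k) k (Finset.notMem_erase k Θ) η x' hx'η
  rw [Finset.insert_erase hk] at heq
  set ζ' := subst (Θ.erase k) x' η with hζ'def
  have hζ' : ζ' = Function.update (subst (Θ.erase k) x' ω) k (ζ ⟨k, hk⟩) := by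
    funext l
    by_cases hlk : l = k
    · subst hlk
      rw [hζ'def]
      simp only [subst_apply]
      rw [dif_neg (Finset.notMem_erase l Θ), Function.update_self, hη]
      simp only [subst_apply]
      rw [dif_pos hk]
    · rw [Function.update_of_ne hlk, hζ'def]
      simp only [subst_apply]
      by_cases hle : l ∈ Θ.erase k
      · rw [dif_pos hle, dif_pos hle]
      · have hlΘ : l ∉ Θ := fun hc => hle (Finset.mem_erase.2 ⟨hlk, hc⟩)
        rw [dif_neg hle, dif_neg hle, hη]
        simp only [subst_apply]
        rw [dif_neg hlΘ]
  rw [Rexpr, ← hζ'def, hsing k] at heq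
  -- show `ρ k ζ'` is positive
  rw [← hζ']
  by_contra hB
  have hB0 : (ρ k ζ' : ℝ≥0∞) = 0 := by
    have : ρ k ζ' = 0 := le_antisymm (not_lt.1 hB) zero_le
    rw [this, ENNReal.coe_zero]
  rw [hB0] at heq
  have hzero : ∀ (hR : (ρF Θ η : ℝ≥0∞) =
      (ρF (Θ.erase k) η : ℝ≥0∞) / 0), False := by
    intro hR
    by_cases hA : (ρF (Θ.erase k) η : ℝ≥0∞) = 0
    · rw [hA, ENNReal.zero_div] at hR; exact hne hR
    · rw [ENNReal.div_zero hA] at hR; exact ENNReal.coe_ne_top hR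
  by_cases hA2 : (ρF (Θ.erase k) ζ' : ℝ≥0∞) = 0
  · rw [hA2, ENNReal.zero_div, zero_mul] at heq
    exact hzero heq
  · rw [ENNReal.div_zero hA2] at heq
    by_cases hK2 : freeF lam {k}
        (fun η' => ((ρ k η' : ℝ≥0∞)) / ((ρF (Θ.erase k) η' : ℝ≥0∞))) ζ' = 0
    · rw [hK2, mul_zero] at heq
      exact hzero heq
    · rw [ENNReal.top_mul hK2, ENNReal.div_top] at heq
      exact hne heq

end GibbsAux

namespace GibbsAux
open GibbsSingleton MeasureTheory Set Function

variable {ι E : Type*} [MeasurableSpace E] [DecidableEq ι]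
variable {lam : ι → Measure E} {ρ : ι → Config ι E → ℝ≥0}
variable {ρF : Finset ι → Config ι E → ℝ≥0}

theorem normalized_of_rec
    (hmeas : ∀ i, Measurable (ρ i))
    (hnorm : ∀ (i : ι) (ω : Config ι E), freeF lam {i} (fun η => (ρ i η : ℝ≥0∞)) ω = 1)
    (h1 : H1 lam ρ)
    (h0 : ∀ ω, ρF ∅ ω = 1) (hsing : ∀ i, ρF {i} = ρ i)
    (hmeasF : ∀ Λ, Measurable (ρF Λ))
    (hstep : ∀ (Λ : Finset ι) (i : ι), i ∉ Λ → ∀ ω : Config ι E,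
      ∀ x ∈ bSetF lam ρ Λ {i} ω,
        (ρF (insert i Λ) ω : ℝ≥0∞) = (ρF Λ ω : ℝ≥0∞) / Rexpr lam ρF Λ {i} x ω) :
    ∀ (Λ : Finset ι) (ω : Config ι E),
      freeF lam Λ (fun η => (ρF Λ η : ℝ≥0∞)) ω = 1 := by
  suffices H : ∀ (n : ℕ) (Θ : Finset ι), Θ.card = n → ∀ ω : Config ι E,
      freeF lam Θ (fun η => (ρF Θ η : ℝ≥0∞)) ω = 1 by
    intro Λ ω; exact H Λ.card Λ rfl ω
  intro n
  induction n using Nat.strong_induction_on with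
  | _ n IHN =>
  intro Θ hcard ω
  rcases Finset.eq_empty_or_nonempty Θ with rfl | ⟨i, hi⟩
  · rw [freeF_eq_lmarginal, lmarginal_empty, h0]
    simp
  set f : Config ι E → ℝ≥0∞ := fun η => (ρF Θ η : ℝ≥0∞) with hfdef
  have hf : Measurable f := measurable_coe_nnreal_ennreal.comp (hmeasF Θ)
  have hiΛ : i ∉ Θ.erase i := Finset.notMem_erase i Θ
  have hins : insert i (Θ.erase i) = Θ := Finset.insert_erase hi
  have hcard' : (Θ.erase i).card < n := hcard ▸ Finset.card_erase_lt_of_mem hi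
  -- choices of good configurations
  have hchoice : ∀ (k : ι), ∀ m : {y // y ∈ Θ.erase k},
      m.1 ∉ ((Θ.erase k).erase m.1) ∪ {k} := by
    intro k m
    rw [Finset.mem_union]
    rintro (h | h)
    · exact Finset.notMem_erase m.1 _ h
    · exact (Finset.mem_erase.1 m.2).1 (Finset.mem_singleton.1 h)
  set xg : ∀ k : ι, {y // y ∈ Θ.erase k} → E :=
    fun k m => (h1 ω m.1 (((Θ.erase k).erase m.1) ∪ {k}) (hchoice k m)).choose with hxgdef
  have hxg : ∀ (k : ι) (m : {y // y ∈ Θ.erase k}),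
      xg k m ∈ bSet lam ρ m.1 (((Θ.erase k).erase m.1) ∪ {k}) ω :=
    fun k m => (h1 ω m.1 _ (hchoice k m)).choose_spec
  set x : {y // y ∈ Θ.erase i} → E := xg i with hxdef
  -- the restriction sets and measures
  set T : ι → Set E := fun k =>
    if k ∈ Θ then
      {t | 0 < ρ k (Function.update (subst (Θ.erase k) (xg k) ω) k t)}
    else Set.univ with hTdef
  have hTmeas : ∀ k, MeasurableSet (T k) := by
    intro k
    simp only [hTdef]
    split
    · exact measurableSet_lt measurable_const ((hmeas k).comp (measurable_update _))
    · exact MeasurableSet.univ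
  have hTk : ∀ k, k ∈ Θ →
      T k = {t | 0 < ρ k (Function.update (subst (Θ.erase k) (xg k) ω) k t)} := by
    intro k hk; simp only [hTdef, if_pos hk]
  set ν : ι → Measure E := fun k =>
    if k ∈ Θ then (lam k).restrict (T k) else 0 with hνdef
  have hνk : ∀ k, k ∈ Θ → ν k = (lam k).restrict (T k) := by
    intro k hk; simp only [hνdef, if_pos hk]
  haveI hν : ∀ k, SigmaFinite (ν k) := by
    intro k
    by_cases hk : k ∈ Θ
    · rw [hνk k hk]
      have hTk' : T k = {t | 0 < (fun t => ((ρ k (Function.update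
          (subst (Θ.erase k) (xg k) ω) k t) : ℝ≥0) : ℝ≥0∞)) t} := by
        rw [hTk k hk]; ext t; simp [ENNReal.coe_pos]
      rw [hTk']
      refine sigmaFinite_restrict_pos (lam k) _
        (measurable_coe_nnreal_ennreal.comp ((hmeas k).comp (measurable_update _))) ?_
      have hone := hnorm k (subst (Θ.erase k) (xg k) ω)
      rw [freeF_singleton] at hone
      exact hone
    · simp only [hνdef, if_neg hk]
      infer_instance
  -- support property
  have hsupp : ∀ ζ : {y // y ∈ Θ} → E, f (subst Θ ζ ω) ≠ 0 →
      ∀ k : {y // y ∈ Θ}, ζ k ∈ T k.1 := by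
    intro ζ hζ k
    have hpos := support_step hsing hstep Θ k.1 k.2 ω (xg k.1)
      (fun m => hxg k.1 m) ζ hζ
    rw [hTk k.1 k.2]
    exact hpos
  -- transfer between lam-marginals and ν-marginals on supported sets
  have hrestr : ∀ (Δ : Finset ι), (∀ l ∈ Δ, l ∈ Θ) → ∀ (η : Config ι E),
      (∀ ζ : {y // y ∈ Δ} → E, f (subst Δ ζ η) ≠ 0 → ∀ k : {y // y ∈ Δ}, ζ k ∈ T k.1) →
      (∫⋯∫⁻_Δ, f ∂lam) η = (∫⋯∫⁻_Δ, f ∂ν) η := by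
    intro Δ hΔ η hg
    have h1' : (∫⋯∫⁻_Δ, f ∂lam) η
        = ∫⁻ ζ, f (subst Δ ζ η) ∂Measure.pi (fun k : {y // y ∈ Δ} => lam k.1) := rfl
    have h2' : (∫⋯∫⁻_Δ, f ∂ν) η
        = ∫⁻ ζ, f (subst Δ ζ η) ∂Measure.pi (fun k : {y // y ∈ Δ} => ν k.1) := rfl
    rw [h1', h2']
    have hme : (fun k : {y // y ∈ Δ} => ν k.1)
        = fun k : {y // y ∈ Δ} => (lam k.1).restrict (T k.1) :=
      funext fun k => hνk k.1 (hΔ k.1 k.2)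
    rw [hme]
    refine lintegral_pi_restrict (fun k : {y // y ∈ Δ} => lam k.1) (fun k => T k.1)
      (fun k => hTmeas k.1) _ ?_
    intro ζ hζ
    by_contra h0'
    refine hζ (Set.mem_univ_pi.2 fun k => hg ζ h0' k)
  -- good configuration `x` in modified environments
  have hxenv : ∀ η : Config ι E, (∀ l, l ∉ Θ → η l = ω l) →
      ∀ m : {y // y ∈ Θ.erase i}, x m ∈ bSet lam ρ m.1 (((Θ.erase i).erase m.1) ∪ {i}) η := by
    intro η hη m
    refine bSet_subset lam (le_refl _) (hchoice i m) ?_ (hxg i m)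
    intro l hl hlm
    refine hη l ?_
    intro hlΘ
    by_cases hli : l = i
    · exact hl (Finset.mem_union_right _ (Finset.mem_singleton.2 hli))
    · exact hl (Finset.mem_union_left _
        (Finset.mem_erase.2 ⟨hlm, Finset.mem_erase.2 ⟨hli, hlΘ⟩⟩))
  -- (c7)
  have c7 : ∀ t : E, subst ({i} : Finset ι) (fun _ => t) ω = Function.update ω i t := by
    intro t; funext l
    by_cases hli : l = i
    · subst hli
      rw [subst_apply, dif_pos (Finset.mem_singleton_self l), Function.update_self]
    · rw [subst_apply, dif_neg (fun hc => hli (Finset.mem_singleton.1 hc)),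
        Function.update_of_ne hli]
  -- (c9)
  have c9 : ∀ t : E, subst (Θ.erase i) x (Function.update ω i t)
      = Function.update (subst (Θ.erase i) x ω) i t := by
    intro t; funext l
    by_cases hli : l = i
    · subst hli
      rw [subst_apply, dif_neg hiΛ, Function.update_self, Function.update_self]
    · rw [subst_apply, Function.update_of_ne hli, Function.update_of_ne hli]
      exact (subst_apply _ _ _ _).symm
  -- abbreviations
  set χ : E → Config ι E := fun t => subst (Θ.erase i) x (Function.update ω i t) with hχdef
  set G : Config ι E → ℝ≥0∞ := fun η => (ρ i η : ℝ≥0∞) / (ρF (Θ.erase i) η : ℝ≥0∞) with hGdef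
  set A : E → ℝ≥0∞ := fun t => (ρF (Θ.erase i) (χ t) : ℝ≥0∞) with hAdef
  set B : E → ℝ≥0∞ := fun t => (ρ i (χ t) : ℝ≥0∞) with hBdef
  set Kc : ℝ≥0∞ := freeF lam {i} G (subst (Θ.erase i) x ω) with hKcdef
  -- facts from posK
  have hdisj1 : ∀ k ∈ Θ.erase i, k ∉ ({i} : Finset ι) := by
    intro k hk
    rw [Finset.mem_singleton]
    exact (Finset.mem_erase.1 hk).1
  obtain ⟨hPK1, hPK2⟩ := posK hnorm h0 hsing hstep (Θ.erase i).card (Θ.erase i) rfl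
    {i} hdisj1 ω x (fun m => hxg i m)
  have hA : ∀ t, 0 < A t := by
    intro t
    have := hPK1 (fun _ => t)
    rw [c7 t] at this
    exact this
  obtain ⟨c, C, hc, hC, hKb⟩ := hPK2 i (Finset.mem_singleton_self i)
  have hKt : ∀ t, c ≤ freeF lam {i} G (χ t) ∧ freeF lam {i} G (χ t) ≤ C := by
    intro t
    have := hKb (fun _ => t)
    rw [c7 t] at this
    exact this
  -- Kc equals freeF at χ (ω i), hence is bounded
  have hKcχ : Kc = freeF lam {i} G (χ (ω i)) := by
    have hχω : χ (ω i) = subst (Θ.erase i) x ω := by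
      rw [hχdef]; simp only []; rw [Function.update_eq_self]
    rw [hχω, hKcdef]
  have hKc0 : Kc ≠ 0 := by rw [hKcχ]; exact (lt_of_lt_of_le hc (hKt (ω i)).1).ne'
  have hKcT : Kc ≠ ⊤ := by rw [hKcχ]; exact (lt_of_le_of_lt (hKt (ω i)).2 hC).ne
  -- freeF at χ t is constant in t
  have hKconst : ∀ t, freeF lam {i} G (χ t) = Kc := by
    intro t
    have hupd : ∀ u : E, Function.update (χ t) i u
        = Function.update (subst (Θ.erase i) x ω) i u := by
      intro u; funext l
      by_cases hli : l = i
      · subst hli; rw [Function.update_self, Function.update_self]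
      · rw [Function.update_of_ne hli, Function.update_of_ne hli, hχdef]
        simp only [subst_apply]
        by_cases hle : l ∈ Θ.erase i
        · rw [dif_pos hle, dif_pos hle]
        · rw [dif_neg hle, dif_neg hle, Function.update_of_ne hli]
    rw [freeF_singleton, hKcdef, freeF_singleton]
    exact lintegral_congr fun u => by rw [hupd u]
  -- inner computation
  have hinner : ∀ t : E, freeF lam (Θ.erase i) f (Function.update ω i t)
      = (B t / A t) * Kc⁻¹ := by
    intro t
    set ω' := Function.update ω i t with hω'def
    have hRexpr : ∀ σ : {y // y ∈ Θ.erase i} → E,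
        Rexpr lam ρF (Θ.erase i) ({i} : Finset ι) x (subst (Θ.erase i) σ ω')
          = (A t / B t) * Kc := by
      intro σ
      rw [Rexpr, subst_subst]
      have hxω' : subst (Θ.erase i) x ω' = χ t := rfl
      rw [hxω']
      have hGeq : (fun η => ((ρF {i} η : ℝ≥0∞)) / ((ρF (Θ.erase i) η : ℝ≥0∞))) = G := by
        funext η; rw [hGdef]; simp only []; rw [hsing i]
      rw [hGeq, hKconst t, hsing i, hAdef, hBdef]
    have hint : ∀ σ : {y // y ∈ Θ.erase i} → E,
        f (subst (Θ.erase i) σ ω')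
          = (ρF (Θ.erase i) (subst (Θ.erase i) σ ω') : ℝ≥0∞) * ((A t / B t) * Kc)⁻¹ := by
      intro σ
      have hxm : x ∈ bSetF lam ρ (Θ.erase i) {i} (subst (Θ.erase i) σ ω') := by
        intro m
        refine hxenv _ ?_ m
        intro l hlΘ
        have hle : l ∉ Θ.erase i := fun hc => hlΘ (Finset.mem_of_mem_erase hc)
        have hli : l ≠ i := fun hc => hlΘ (hc ▸ hi)
        rw [subst_apply, dif_neg hle, hω'def, Function.update_of_ne hli]
      have heq := hstep (Θ.erase i) i hiΛ (subst (Θ.erase i) σ ω') x hxm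
      rw [hins] at heq
      rw [hfdef]
      simp only []
      rw [heq, hRexpr σ, div_eq_mul_inv]
    have hABK0 : (A t / B t) * Kc ≠ 0 := by
      refine mul_ne_zero (fun h => ?_) hKc0
      rcases ENNReal.div_eq_zero_iff.1 h with h' | h'
      · exact (hA t).ne' h'
      · exact ENNReal.coe_ne_top (by rw [hBdef] at h'; exact h')
    have hfree : freeF lam (Θ.erase i) f ω'
        = (freeF lam (Θ.erase i) (fun η => (ρF (Θ.erase i) η : ℝ≥0∞)) ω')
          * ((A t / B t) * Kc)⁻¹ := by
      rw [freeF, freeF, ← lintegral_mul_const' _ _ (ENNReal.inv_ne_top.2 hABK0)]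
      exact lintegral_congr fun σ => hint σ
    rw [hfree, IHN (Θ.erase i).card hcard' (Θ.erase i) rfl ω', one_mul,
      ENNReal.mul_inv (Or.inr hKcT) (Or.inr hKc0),
      ENNReal.inv_div (Or.inl ENNReal.coe_ne_top) (Or.inr (hA t).ne')]
  -- the B/A-integral over the restricted measure equals Kc
  have hTi : T i = {t | 0 < ρ i (Function.update (subst (Θ.erase i) x ω) i t)} := hTk i hi
  have hBA : ∫⁻ t, B t / A t ∂ν i = Kc := by
    rw [hνk i hi, ← lintegral_indicator (hTmeas i)]
    have hind : (T i).indicator (fun t => B t / A t) = fun t => B t / A t := by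
      funext t
      by_cases ht : t ∈ T i
      · rw [Set.indicator_of_mem ht]
      · rw [Set.indicator_of_notMem ht]
        have hB0 : ρ i (χ t) = 0 := by
          rw [hTi] at ht
          have : ¬ 0 < ρ i (Function.update (subst (Θ.erase i) x ω) i t) := ht
          rw [← c9 t] at this
          exact le_antisymm (not_lt.1 this) zero_le
        rw [hBdef]
        simp only []
        rw [hB0, ENNReal.coe_zero, ENNReal.zero_div]
    rw [hind, hKcdef, freeF_singleton]
    refine (lintegral_congr fun u => ?_).symm
    rw [← c9 u]
  -- final assembly
  have main : freeF lam Θ f ω = 1 := by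
    have e1 : freeF lam Θ f ω = (∫⋯∫⁻_Θ, f ∂ν) ω := by
      rw [freeF_eq_lmarginal]
      exact hrestr Θ (fun l hl => hl) ω (fun ζ hζ => hsupp ζ hζ)
    have e2 : (∫⋯∫⁻_Θ, f ∂ν) ω
        = ∫⁻ t, (∫⋯∫⁻_(Θ.erase i), f ∂ν) (Function.update ω i t) ∂ν i := by
      have := lmarginal_insert (μ := ν) f hf hiΛ ω
      rw [hins] at this
      exact this
    have e3 : ∀ t, (∫⋯∫⁻_(Θ.erase i), f ∂ν) (Function.update ω i t)
        = freeF lam (Θ.erase i) f (Function.update ω i t) := by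
      intro t
      rw [freeF_eq_lmarginal]
      refine (hrestr (Θ.erase i) (fun l hl => Finset.mem_of_mem_erase hl)
        (Function.update ω i t) ?_).symm
      intro σ hσ k
      set ζ : {y // y ∈ Θ} → E :=
        fun l => if hl : l.1 ∈ Θ.erase i then σ ⟨l.1, hl⟩ else t with hζdef
      have hce : subst (Θ.erase i) σ (Function.update ω i t) = subst Θ ζ ω := by
        funext l
        by_cases hle : l ∈ Θ.erase i
        · have hlΘ : l ∈ Θ := Finset.mem_of_mem_erase hle
          rw [subst_apply, dif_pos hle, subst_apply, dif_pos hlΘ, hζdef]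
          simp only []
          rw [dif_pos hle]
        · by_cases hli : l = i
          · subst hli
            rw [subst_apply, dif_neg hle, Function.update_self, subst_apply,
              dif_pos hi, hζdef]
            simp only []
            rw [dif_neg hle]
          · have hlΘ : l ∉ Θ := fun hc => hle (Finset.mem_erase.2 ⟨hli, hc⟩)
            rw [subst_apply, dif_neg hle, Function.update_of_ne hli,
              subst_apply, dif_neg hlΘ]
      rw [hce] at hσ
      have hall := hsupp ζ hσ
      have : ζ ⟨k.1, Finset.mem_of_mem_erase k.2⟩ = σ k := by
        rw [hζdef]
        simp only []
        rw [dif_pos k.2]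
      rw [← this]
      exact hall ⟨k.1, Finset.mem_of_mem_erase k.2⟩
    rw [e1, e2]
    calc ∫⁻ t, (∫⋯∫⁻_(Θ.erase i), f ∂ν) (Function.update ω i t) ∂ν i
        = ∫⁻ t, (B t / A t) * Kc⁻¹ ∂ν i := by
          refine lintegral_congr fun t => ?_
          rw [e3 t, hinner t]
      _ = (∫⁻ t, B t / A t ∂ν i) * Kc⁻¹ :=
          lintegral_mul_const' _ _ (ENNReal.inv_ne_top.2 hKc0)
      _ = Kc * Kc⁻¹ := by rw [hBA]
      _ = 1 := ENNReal.mul_inv_cancel hKc0 hKcT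
  exact main

end GibbsAux

/-- **(P1).**  If the singletons are normalized and satisfy (H1) and (H2), then every
function `ρ_Λ` of the recursively constructed family is normalized:
`λ_Λ(ρ_Λ ∣ ω) = 1` for every finite `Λ` and every `ω`. -/
theorem constructed_family_normalized
    {d : ℕ} (hd : 0 < d) {E : Type*} [MeasurableSpace E]
    (lam : (Fin d → ℤ) → Measure E)
    (ρ : (Fin d → ℤ) → Config (Fin d → ℤ) E → ℝ≥0)
    (hmeas : ∀ i, Measurable (ρ i))
    (hnorm : ∀ (i : Fin d → ℤ) (ω : Config (Fin d → ℤ) E),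
      freeF lam {i} (fun η => (ρ i η : ℝ≥0∞)) ω = 1)
    (h1 : H1 lam ρ) (h2 : H2 lam ρ)
    (ρF : Finset (Fin d → ℤ) → Config (Fin d → ℤ) E → ℝ≥0)
    (hrec : IsRec lam ρ ρF) :
    ∀ (Λ : Finset (Fin d → ℤ)) (ω : Config (Fin d → ℤ) E),
      freeF lam Λ (fun η => (ρF Λ η : ℝ≥0∞)) ω = 1 := by
  obtain ⟨h0, hsing, hmeasF, hstep'⟩ := hrec
  exact GibbsAux.normalized_of_rec hmeas hnorm h1 h0 hsing hmeasF
    (fun Λ i hi ω x hx => (hstep' Λ i hi ω).2 x hx)
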